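/- There exists a function f : ℝ → ℝ which is strictly positive everywhere, is real-analytic on all of ℝ, and tiles ℝ with ℤ at a constant level: there is a constant ℓ > 0 such that for every x ∈ ℝ the series ∑_{n ∈ ℤ} f(x − n) converges and equals ℓ. -/

import Mathlib

open Filter Topology

/-- Complex version of the periodization of `(1+x²)⁻¹`. -/
noncomputable def st8g (z : ℂ) : ℂ := ∑' n : ℤ, (1 + (z - n)^2)⁻¹

/-- Real periodization of `(1+x²)⁻¹`. -/
noncomputable def st8s (x : ℝ) : ℝ := ∑' n : ℤ, (1 + (x - n)^2)⁻¹

lemma st8_re_lb {z : ℂ} (hz : |z.im| < 1/2) (n : ℤ) :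
    1/2 + (z.re - n)^2 ≤ ‖1 + (z - n)^2‖ := by
  have h1 : (1 + (z - n)^2).re = 1 + (z.re - n)^2 - z.im^2 := by
    simp [pow_two, Complex.add_re, Complex.mul_re, Complex.sub_re, Complex.sub_im]
    ring
  have h2 : z.im^2 < 1/4 := by nlinarith [sq_abs z.im, abs_nonneg z.im]
  calc 1/2 + (z.re - n)^2 ≤ (1 + (z - n)^2).re := by rw [h1]; nlinarith
    _ ≤ |(1 + (z - n)^2).re| := le_abs_self _
    _ ≤ ‖1 + (z - n)^2‖ := Complex.abs_re_le_norm _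

lemma st8_ne {z : ℂ} (hz : |z.im| < 1/2) (n : ℤ) : 1 + (z - n)^2 ≠ 0 := by
  intro h0
  have := st8_re_lb hz n
  rw [h0] at this
  simp at this
  nlinarith [sq_nonneg (z.re - n)]

lemma st8_bound {R : ℝ} {n : ℤ} (hn : 2*R + 2 ≤ |(n : ℝ)|)
    {z : ℂ} (hz : |z.im| < 1/2) (hre : |z.re| ≤ R) :
    ‖((1 + (z - n)^2)⁻¹ : ℂ)‖ ≤ 4 * (1 / (n : ℝ)^2) := by
  have hR : 0 ≤ R := le_trans (abs_nonneg _) hre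
  have h1 : |(n : ℝ)| - |z.re| ≤ |z.re - (n : ℝ)| := by
    rw [abs_sub_comm]; exact abs_sub_abs_le_abs_sub _ _
  have h0 : (n : ℝ)^2/4 ≤ (z.re - n)^2 := by
    nlinarith [sq_abs (z.re - (n : ℝ)), sq_abs ((n : ℝ)), abs_nonneg z.re,
      abs_nonneg ((n : ℝ)), abs_nonneg (z.re - (n : ℝ))]
  have hnz : (0:ℝ) < (n : ℝ)^2/4 := by nlinarith [abs_nonneg ((n : ℝ)), sq_abs ((n : ℝ))]
  have hlb : (n : ℝ)^2/4 ≤ ‖1 + (z - n)^2‖ := by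
    have := st8_re_lb hz n
    nlinarith
  rw [norm_inv]
  have h2 : ‖1 + (z - ↑n)^2‖⁻¹ ≤ ((n : ℝ)^2/4)⁻¹ := by
    apply inv_anti₀ hnz hlb
  refine h2.trans (le_of_eq ?_)
  rw [one_div]
  field_simp

lemma st8_cof (R : ℝ) : ∀ᶠ n : ℤ in cofinite, 2*R + 2 ≤ |(n : ℝ)| := by
  rw [Int.cofinite_eq, eventually_sup]
  constructor
  · filter_upwards [eventually_le_atBot (⌊-(2*R+2)⌋ : ℤ)] with n hn
    have h1 : (n : ℝ) ≤ -(2*R+2) := le_trans (by exact_mod_cast hn) (Int.floor_le _)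
    calc 2*R + 2 ≤ -(n : ℝ) := by linarith
      _ ≤ |(n : ℝ)| := neg_le_abs _
  · filter_upwards [eventually_ge_atTop (⌈2*R+2⌉ : ℤ)] with n hn
    have h1 : (2*R+2 : ℝ) ≤ (n : ℝ) := le_trans (Int.le_ceil _) (by exact_mod_cast hn)
    exact h1.trans (le_abs_self _)

lemma st8_u_summable : Summable (fun n : ℤ => 4 * (1 / (n : ℝ)^2)) :=
  (Real.summable_one_div_int_pow.mpr one_lt_two).mul_left 4

lemma st8_summableC {z : ℂ} (hz : |z.im| < 1/2) :
    Summable (fun n : ℤ => ((1 + (z - n)^2)⁻¹ : ℂ)) := by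
  apply Summable.of_norm_bounded_eventually st8_u_summable
  filter_upwards [st8_cof |z.re|] with n hn
  exact st8_bound hn hz le_rfl

lemma st8_summableR (x : ℝ) : Summable (fun n : ℤ => ((1 + (x - n)^2)⁻¹ : ℝ)) := by
  have h := st8_summableC (z := (x : ℂ)) (by simp)
  rw [← Complex.summable_ofReal]
  refine h.congr fun n => ?_
  push_cast
  ring

lemma st8_g_eq (x : ℝ) : st8g x = ((st8s x : ℝ) : ℂ) := by
  rw [st8g, st8s, Complex.ofReal_tsum]
  refine tsum_congr fun n => ?_
  push_cast
  ring

lemma st8_spos (x : ℝ) : 0 < st8s x := by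
  refine Summable.tsum_pos (st8_summableR x) (fun n => by positivity) 0 (by positivity)

lemma st8_periodic : Function.Periodic st8s 1 := by
  intro x
  rw [st8s, st8s,
    ← (Equiv.subRight (1 : ℤ)).tsum_eq (fun n : ℤ => ((1 + (x - n)^2)⁻¹ : ℝ))]
  refine tsum_congr fun n => ?_
  simp only [Equiv.subRight_apply]
  congr 1
  push_cast
  ring

lemma st8_s_sub_int (x : ℝ) (n : ℤ) : st8s (x - n) = st8s x := by
  have := st8_periodic.sub_int_mul_eq (x := x) (n := n)
  simpa using this

lemma st8_gdiff : DifferentiableOn ℂ st8g {z : ℂ | |z.im| < 1/2} := by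
  intro z₀ hz₀
  set R : ℝ := |z₀.re| + 1 with hR
  set V : Set ℂ := {z | |z.im| < 1/2} ∩ {z | |z.re| < R} with hV
  have hVo : IsOpen V :=
    (isOpen_lt (continuous_abs.comp Complex.continuous_im) continuous_const).inter
      (isOpen_lt (continuous_abs.comp Complex.continuous_re) continuous_const)
  have hz₀V : z₀ ∈ V := ⟨hz₀, by simp only [Set.mem_setOf_eq, hR]; linarith⟩
  have htu : TendstoUniformlyOn
      (fun (t : Finset ℤ) (z : ℂ) => ∑ n ∈ t, ((1 + (z - n)^2)⁻¹))
      (fun z => ∑' n : ℤ, ((1 + (z - n)^2)⁻¹ : ℂ)) atTop V := by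
    apply tendstoUniformlyOn_tsum_of_cofinite_eventually st8_u_summable
    filter_upwards [st8_cof R] with n hn z hzV
    exact st8_bound hn hzV.1 (le_of_lt hzV.2)
  have hdiff : DifferentiableOn ℂ (fun z => ∑' n : ℤ, ((1 + (z - n)^2)⁻¹ : ℂ)) V := by
    refine htu.tendstoLocallyUniformlyOn.differentiableOn (Eventually.of_forall fun t => ?_) hVo
    refine DifferentiableOn.fun_sum fun n _ => ?_
    refine DifferentiableOn.inv ?_ fun z hz => st8_ne hz.1 n
    exact (((differentiable_id.sub_const _).pow 2).const_add 1).differentiableOn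
  have : DifferentiableOn ℂ st8g V := hdiff
  exact (this.differentiableAt (hVo.mem_nhds hz₀V)).differentiableWithinAt

lemma st8_s_analytic : AnalyticOnNhd ℝ st8s Set.univ := by
  have hS : IsOpen {z : ℂ | |z.im| < 1/2} :=
    isOpen_lt (continuous_abs.comp Complex.continuous_im) continuous_const
  have hg : AnalyticOnNhd ℂ st8g {z : ℂ | |z.im| < 1/2} := st8_gdiff.analyticOnNhd hS
  have hgr : AnalyticOnNhd ℝ st8g {z : ℂ | |z.im| < 1/2} := hg.restrictScalars
  have hofReal : AnalyticOnNhd ℝ (fun x : ℝ => (x : ℂ)) Set.univ :=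
    Complex.ofRealCLM.analyticOnNhd Set.univ
  have hcomp1 : AnalyticOnNhd ℝ (fun x : ℝ => st8g (x : ℂ)) Set.univ :=
    hgr.comp hofReal fun x _ => by simp
  have hcomp : AnalyticOnNhd ℝ (fun x : ℝ => (st8g (x : ℂ)).re) Set.univ :=
    (Complex.reCLM.analyticOnNhd Set.univ).comp hcomp1 (Set.mapsTo_univ _ _)
  refine hcomp.congr isOpen_univ fun x _ => ?_
  rw [st8_g_eq]
  simp

theorem stmt_8 :
    ∃ f : ℝ → ℝ, (∀ x, 0 < f x) ∧ AnalyticOn ℝ f Set.univ ∧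
      ∃ ℓ : ℝ, 0 < ℓ ∧ ∀ x : ℝ, HasSum (fun n : ℤ => f (x - n)) ℓ := by
  refine ⟨fun x => (1 + x^2)⁻¹ / st8s x, fun x => ?_, ?_, 1, one_pos, fun x => ?_⟩
  · exact div_pos (by positivity) (st8_spos x)
  · have h1 : AnalyticOnNhd ℝ (fun x : ℝ => 1 + x^2) Set.univ :=
      analyticOnNhd_const.add (analyticOnNhd_id.pow 2)
    have hnum : AnalyticOnNhd ℝ (fun x : ℝ => (1 + x^2)⁻¹) Set.univ :=
      h1.inv fun x _ => by positivity
    exact (hnum.div st8_s_analytic fun x _ => (st8_spos x).ne').analyticOn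
  · have h : HasSum (fun n : ℤ => ((1 + (x - n)^2)⁻¹ : ℝ)) (st8s x) :=
      (st8_summableR x).hasSum
    have h2 := h.mul_right (st8s x)⁻¹
    rw [mul_inv_cancel₀ (st8_spos x).ne'] at h2
    simpa only [st8_s_sub_int, div_eq_mul_inv] using h2
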